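/- Quasi-boundedness of asymptotically diverging twisted tubes: if ω lies in the open right half-plane, ω ⊆ {t : c < |t| < C} for some 0 < c < C, and |θ'(x1)| → ∞ as |x1| → ∞, then dist(x, ∂Ω) → 0 as |x| → ∞ with x ∈ Ω; i.e., for every ε > 0 there is S > 0 such that every x ∈ Ω with |x| > S satisfies dist(x, ∂Ω) < ε. -/

import Mathlib

/-- A continuous path from a point of an open set to a point outside it meets the frontier. -/
lemma aux_path_frontier {X : Type*} [TopologicalSpace X] {s : Set X} (hs : IsOpen s)
    {γ : ℝ → X} (hγ : Continuous γ) {a b : ℝ} (hab : a ≤ b)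
    (ha : γ a ∈ s) (hb : γ b ∉ s) : ∃ r ∈ Set.Icc a b, γ r ∈ frontier s := by
  set T : Set ℝ := Set.Icc a b ∩ γ ⁻¹' sᶜ with hT
  have hTc : IsClosed T := isClosed_Icc.inter (hs.isClosed_compl.preimage hγ)
  have hTne : T.Nonempty := ⟨b, ⟨hab, le_rfl⟩, hb⟩
  have hTbdd : BddBelow T := ⟨a, fun r hr => hr.1.1⟩
  have hr0T : sInf T ∈ T := hTc.csInf_mem hTne hTbdd
  set r0 := sInf T with hr0
  have har0 : a < r0 := by
    rcases lt_or_eq_of_le hr0T.1.1 with h | h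
    · exact h
    · exact absurd (h ▸ ha) hr0T.2
  have hmem : ∀ r ∈ Set.Ico a r0, γ r ∈ s := by
    intro r hr
    by_contra hmem
    exact absurd (csInf_le hTbdd ⟨⟨hr.1, le_trans hr.2.le hr0T.1.2⟩, hmem⟩) (not_le.2 hr.2)
  have hcl : γ r0 ∈ closure s := by
    have h1 : r0 ∈ closure (Set.Ico a r0) := by
      rw [closure_Ico har0.ne]
      exact ⟨har0.le, le_rfl⟩
    have h2 : γ r0 ∈ γ '' closure (Set.Ico a r0) := ⟨r0, h1, rfl⟩
    have h3 : γ '' closure (Set.Ico a r0) ⊆ closure (γ '' Set.Ico a r0) :=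
      image_closure_subset_closure_image hγ
    refine closure_mono ?_ (h3 h2)
    rintro - ⟨r, hr, rfl⟩
    exact hmem r hr
  refine ⟨r0, ⟨har0.le, hr0T.1.2⟩, ?_⟩
  rw [hs.frontier_eq]
  exact ⟨hcl, hr0T.2⟩

/-- If `|θ'| ≥ π/δ` on `[a, a+δ]`, then `θ` sweeps an angle `π` within `[a, a+δ]`. -/
lemma aux_key (θ : ℝ → ℝ) (hθ : ContDiff ℝ 1 θ) (δ : ℝ) (hδ : 0 < δ) (a : ℝ)
    (h : ∀ s ∈ Set.Icc a (a + δ), Real.pi / δ ≤ |deriv θ s|) :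
    ∃ w ∈ Set.Icc a (a + δ),
      Real.cos (θ w) = -Real.cos (θ a) ∧ Real.sin (θ w) = -Real.sin (θ a) := by
  have hM : 0 < Real.pi / δ := div_pos Real.pi_pos hδ
  set M := Real.pi / δ with hMdef
  have hMδ : M * δ = Real.pi := div_mul_cancel₀ _ (ne_of_gt hδ)
  have hcd : Continuous (deriv θ) := hθ.continuous_deriv le_rfl
  have hdθ : Differentiable ℝ θ := hθ.differentiable one_ne_zero
  have haM := h a ⟨le_rfl, by linarith⟩
  have hIcc : a ∈ Set.Icc a (a + δ) := ⟨le_rfl, by linarith⟩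
  have hIcc' : a + δ ∈ Set.Icc a (a + δ) := ⟨by linarith, le_rfl⟩
  rcases le_abs.mp haM with hp | hn
  · -- derivative ≥ M on the interval
    have hall : ∀ s ∈ Set.Icc a (a + δ), M ≤ deriv θ s := by
      intro s hs
      rcases le_abs.mp (h s hs) with h1 | h1
      · exact h1
      · exfalso
        have hzero : (0 : ℝ) ∈ deriv θ '' Set.Icc a s := by
          apply intermediate_value_Icc' hs.1 hcd.continuousOn
          constructor <;> linarith
        obtain ⟨u, hu, hu0⟩ := hzero
        have := h u ⟨hu.1, le_trans hu.2 hs.2⟩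
        rw [hu0] at this
        simp at this
        linarith
    have hgrow : M * ((a + δ) - a) ≤ θ (a + δ) - θ a :=
      (convex_Icc a (a + δ)).mul_sub_le_image_sub_of_le_deriv hdθ.continuous.continuousOn
        hdθ.differentiableOn (fun s hs => hall s (interior_subset hs)) a hIcc (a + δ) hIcc'
        (by linarith)
    have hπ : θ a + Real.pi ≤ θ (a + δ) := by nlinarith
    have hsub : Set.Icc (θ a) (θ (a + δ)) ⊆ θ '' Set.Icc a (a + δ) :=
      intermediate_value_Icc (by linarith) hdθ.continuous.continuousOn
    obtain ⟨w, hw, hwv⟩ := hsub ⟨by linarith [Real.pi_pos], hπ⟩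
    refine ⟨w, hw, ?_, ?_⟩
    · rw [hwv, Real.cos_add_pi]
    · rw [hwv, Real.sin_add_pi]
  · -- derivative ≤ -M on the interval
    have hall : ∀ s ∈ Set.Icc a (a + δ), deriv θ s ≤ -M := by
      intro s hs
      rcases le_abs.mp (h s hs) with h1 | h1
      · exfalso
        have hzero : (0 : ℝ) ∈ deriv θ '' Set.Icc a s := by
          apply intermediate_value_Icc hs.1 hcd.continuousOn
          constructor <;> linarith
        obtain ⟨u, hu, hu0⟩ := hzero
        have := h u ⟨hu.1, le_trans hu.2 hs.2⟩
        rw [hu0] at this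
        simp at this
        linarith
      · linarith
    have hgrow : θ (a + δ) - θ a ≤ (-M) * ((a + δ) - a) :=
      (convex_Icc a (a + δ)).image_sub_le_mul_sub_of_deriv_le hdθ.continuous.continuousOn
        hdθ.differentiableOn (fun s hs => hall s (interior_subset hs)) a hIcc (a + δ) hIcc'
        (by linarith)
    have hπ : θ (a + δ) ≤ θ a - Real.pi := by nlinarith
    have hsub : Set.Icc (θ (a + δ)) (θ a) ⊆ θ '' Set.Icc a (a + δ) :=
      intermediate_value_Icc' (by linarith) hdθ.continuous.continuousOn
    obtain ⟨w, hw, hwv⟩ := hsub ⟨hπ, by linarith [Real.pi_pos]⟩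
    refine ⟨w, hw, ?_, ?_⟩
    · rw [hwv, Real.cos_sub_pi]
    · rw [hwv, Real.sin_sub_pi]

/-- Quasi-boundedness of tubes with asymptotically diverging twisting: the Euclidean
distance to the boundary of the twisted tube tends to zero at infinity of the tube. -/
theorem stmt11 (θ : ℝ → ℝ) (hθ : ContDiff ℝ 1 θ)
    (hdiv : Filter.Tendsto (fun x1 : ℝ => |deriv θ x1|) (Filter.cocompact ℝ)
      Filter.atTop)
    (ω : Set (ℝ × ℝ)) (hω : IsOpen ω) (hωhalf : ω ⊆ {t : ℝ × ℝ | 0 < t.1})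
    (c C : ℝ) (hc : 0 < c) (hcC : c < C)
    (hann : ∀ t ∈ ω, c < Real.sqrt (t.1 ^ 2 + t.2 ^ 2) ∧
      Real.sqrt (t.1 ^ 2 + t.2 ^ 2) < C)
    (L : ℝ × ℝ × ℝ → ℝ × ℝ × ℝ)
    (hL : ∀ x : ℝ × ℝ × ℝ, L x =
      (x.1, x.2.1 * Real.cos (θ x.1) + x.2.2 * Real.sin (θ x.1),
        -x.2.1 * Real.sin (θ x.1) + x.2.2 * Real.cos (θ x.1))) :
    ∀ ε > (0 : ℝ), ∃ S > (0 : ℝ), ∀ x ∈ L '' (Set.univ ×ˢ ω),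
      S < Real.sqrt (x.1 ^ 2 + x.2.1 ^ 2 + x.2.2 ^ 2) →
      ∃ y ∈ frontier (L '' (Set.univ ×ˢ ω)),
        Real.sqrt ((x.1 - y.1) ^ 2 + (x.2.1 - y.2.1) ^ 2 + (x.2.2 - y.2.2) ^ 2) < ε := by
  intro ε hε
  have hC : 0 < C := hc.trans hcC
  set δ := ε / 2 with hδdef
  have hδ : 0 < δ := by positivity
  set M := Real.pi / δ with hMdef
  have hM : 0 < M := div_pos Real.pi_pos hδ
  -- the untwisting map
  set F : ℝ × ℝ × ℝ → ℝ × ℝ := fun p =>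
    (p.2.1 * Real.cos (θ p.1) - p.2.2 * Real.sin (θ p.1),
      p.2.1 * Real.sin (θ p.1) + p.2.2 * Real.cos (θ p.1)) with hF
  have hFL : ∀ p : ℝ × ℝ × ℝ, F (L p) = p.2 := by
    intro p
    rw [hL]
    simp only [hF, Prod.ext_iff]
    constructor
    · show _ = p.2.1
      linear_combination p.2.1 * Real.sin_sq_add_cos_sq (θ p.1)
    · show _ = p.2.2
      linear_combination p.2.2 * Real.sin_sq_add_cos_sq (θ p.1)
  have hΩeq : L '' (Set.univ ×ˢ ω) = F ⁻¹' ω := by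
    ext p
    constructor
    · rintro ⟨q, ⟨-, hq2⟩, rfl⟩
      simpa [Set.mem_preimage, hFL q] using hq2
    · intro hp
      refine ⟨(p.1, F p), ⟨Set.mem_univ _, hp⟩, ?_⟩
      rw [hL]
      simp only [hF]
      refine Prod.ext rfl (Prod.ext ?_ ?_)
      · show _ = p.2.1
        linear_combination p.2.1 * Real.sin_sq_add_cos_sq (θ p.1)
      · show _ = p.2.2
        linear_combination p.2.2 * Real.sin_sq_add_cos_sq (θ p.1)
  have hθc : Continuous θ := hθ.continuous
  have hFc : Continuous F := by
    apply Continuous.prodMk <;> fun_prop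
  have hΩopen : IsOpen (L '' (Set.univ ×ˢ ω)) := by
    rw [hΩeq]; exact hω.preimage hFc
  -- thresholds from divergence of the derivative
  rw [cocompact_eq_atBot_atTop] at hdiv
  have h1 : Filter.Tendsto (fun s => |deriv θ s|) Filter.atTop Filter.atTop :=
    hdiv.mono_left le_sup_right
  have h2 : Filter.Tendsto (fun s => |deriv θ s|) Filter.atBot Filter.atTop :=
    hdiv.mono_left le_sup_left
  obtain ⟨R1, hR1⟩ := Filter.eventually_atTop.mp (h1.eventually_ge_atTop M)
  obtain ⟨R2, hR2⟩ := Filter.eventually_atBot.mp (h2.eventually_ge_atTop M)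
  set B := max (max R1 (-R2)) 0 + 1 with hBdef
  have hB : 0 < B := by
    have := le_max_right (max R1 (-R2)) 0
    linarith
  have hBR1 : R1 ≤ B := by
    have h3 := le_max_left R1 (-R2)
    have h4 := le_max_left (max R1 (-R2)) 0
    linarith
  have hBR2 : -B ≤ R2 := by
    have h3 := le_max_right R1 (-R2)
    have h4 := le_max_left (max R1 (-R2)) 0
    linarith
  refine ⟨B + C, by linarith, ?_⟩
  intro x hx hfar
  have hxΩ : F x ∈ ω := by rw [hΩeq] at hx; exact hx
  have ht1 : 0 < (F x).1 := hωhalf hxΩ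
  have htC : Real.sqrt ((F x).1 ^ 2 + (F x).2 ^ 2) < C := (hann _ hxΩ).2
  have htC2 : (F x).1 ^ 2 + (F x).2 ^ 2 < C ^ 2 := (Real.sqrt_lt' hC).mp htC
  have hnorm : x.2.1 ^ 2 + x.2.2 ^ 2 = (F x).1 ^ 2 + (F x).2 ^ 2 := by
    simp only [hF]
    show _ = _
    linear_combination (-(x.2.1 ^ 2) - x.2.2 ^ 2) * Real.sin_sq_add_cos_sq (θ x.1)
  have hfar2 : (B + C) ^ 2 < x.1 ^ 2 + x.2.1 ^ 2 + x.2.2 ^ 2 :=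
    (Real.lt_sqrt (by positivity)).mp hfar
  have hx1 : B < |x.1| := by
    by_contra hcon
    push_neg at hcon
    have hb : x.1 ^ 2 ≤ B ^ 2 := by nlinarith [sq_abs x.1, abs_nonneg x.1]
    nlinarith
  -- find the antipodal angle point
  have hkey : ∃ w : ℝ, |w - x.1| ≤ δ ∧ Real.cos (θ w) = -Real.cos (θ x.1) ∧
      Real.sin (θ w) = -Real.sin (θ x.1) := by
    rcases le_or_gt 0 x.1 with hpos | hneg
    · have hx1' : R1 ≤ x.1 := by
        rw [abs_of_nonneg hpos] at hx1; linarith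
      obtain ⟨w, hw, hcw, hsw⟩ := aux_key θ hθ δ hδ x.1
        (fun s hs => hR1 s (by linarith [hs.1]))
      exact ⟨w, abs_le.mpr ⟨by linarith [hw.1], by linarith [hw.2]⟩, hcw, hsw⟩
    · have hx1' : x.1 ≤ R2 := by
        rw [abs_of_neg hneg] at hx1; linarith
      have hθnC : ContDiff ℝ 1 (fun s => θ (-s)) := hθ.comp contDiff_neg
      obtain ⟨w, hw, hcw, hsw⟩ := aux_key (fun s => θ (-s)) hθnC δ hδ (-x.1)
        (fun s hs => by
          rw [deriv_comp_neg θ s, abs_neg]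
          exact hR2 (-s) (by linarith [hs.1]))
      refine ⟨-w, abs_le.mpr ⟨by linarith [hw.2], by linarith [hw.1]⟩, ?_, ?_⟩
      · simpa using hcw
      · simpa using hsw
  obtain ⟨w, hwd, hcw, hsw⟩ := hkey
  -- the shifted point is outside the tube
  have hzΩ : ((w, x.2.1, x.2.2) : ℝ × ℝ × ℝ) ∉ L '' (Set.univ ×ˢ ω) := by
    rw [hΩeq]
    intro hmem
    have h0 : 0 < (F (w, x.2.1, x.2.2)).1 := hωhalf hmem
    have hneg : (F (w, x.2.1, x.2.2)).1 = -(F x).1 := by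
      simp only [hF, hcw, hsw]
      ring
    rw [hneg] at h0
    linarith
  -- the straight path from x to the shifted point
  have hγc : Continuous (fun r : ℝ => (((1 - r) * x.1 + r * w, x.2.1, x.2.2) : ℝ × ℝ × ℝ)) := by
    fun_prop
  have he0 : (((1 - (0 : ℝ)) * x.1 + 0 * w, x.2.1, x.2.2) : ℝ × ℝ × ℝ) = x := by
    refine Prod.ext (by ring) (Prod.ext rfl rfl)
  have he1 : (((1 - (1 : ℝ)) * x.1 + 1 * w, x.2.1, x.2.2) : ℝ × ℝ × ℝ) = (w, x.2.1, x.2.2) := by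
    refine Prod.ext (by ring) (Prod.ext rfl rfl)
  obtain ⟨r, hr, hyfr⟩ := aux_path_frontier hΩopen hγc zero_le_one
    (by rw [he0]; exact hx) (by rw [he1]; exact hzΩ)
  refine ⟨((1 - r) * x.1 + r * w, x.2.1, x.2.2), hyfr, ?_⟩
  have hd1 : x.1 - ((1 - r) * x.1 + r * w) = r * (x.1 - w) := by ring
  have habs : |x.1 - ((1 - r) * x.1 + r * w)| ≤ δ := by
    rw [hd1, abs_mul, abs_of_nonneg hr.1]
    have h5 : |x.1 - w| ≤ δ := by rw [abs_sub_comm]; exact hwd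
    have h6 := mul_le_mul hr.2 h5 (abs_nonneg (x.1 - w)) zero_le_one
    linarith
  have hsq : Real.sqrt ((x.1 - ((1 - r) * x.1 + r * w)) ^ 2 + (x.2.1 - x.2.1) ^ 2 +
      (x.2.2 - x.2.2) ^ 2) = |x.1 - ((1 - r) * x.1 + r * w)| := by
    rw [show (x.2.1 - x.2.1 : ℝ) = 0 by ring, show (x.2.2 - x.2.2 : ℝ) = 0 by ring]
    rw [show ((x.1 - ((1 - r) * x.1 + r * w)) ^ 2 + 0 ^ 2 + 0 ^ 2 : ℝ) =
      (x.1 - ((1 - r) * x.1 + r * w)) ^ 2 by ring]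
    exact Real.sqrt_sq_eq_abs _
  calc Real.sqrt ((x.1 - ((1 - r) * x.1 + r * w)) ^ 2 + (x.2.1 - x.2.1) ^ 2 +
        (x.2.2 - x.2.2) ^ 2) = |x.1 - ((1 - r) * x.1 + r * w)| := hsq
    _ ≤ δ := habs
    _ < ε := by rw [hδdef]; linarith
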